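/- Let A_1, ..., A_m be non-negative matrices that define bounded operators on ℓ². Then w(A_1 ∘ A_2 ∘ ⋯ ∘ A_m) ≤ (w(A_1^{(m)}) · w(A_2^{(m)}) ⋯ w(A_m^{(m)}))^{1/m}. -/

import Mathlib

open scoped ENNReal NNReal BigOperators InnerProductSpace

noncomputable section

/-- The sequence space `ℓ^p(ℕ)` (real scalars). -/
abbrev lpSeq (p : ℝ≥0∞) := lp (fun _ : ℕ => ℝ) p

/-- The (infinite) non-negative matrix `a` defines the bounded operator `T` on `ℓ^p`:
for every `x ∈ ℓ^p` and every row index `i`, the series `∑_j a i j * x j` converges,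
with sum equal to `(T x) i`. -/
def Represents (p : ℝ≥0∞) [Fact (1 ≤ p)] (a : ℕ → ℕ → ℝ)
    (T : lpSeq p →L[ℝ] lpSeq p) : Prop :=
  ∀ x : lpSeq p, ∀ i : ℕ, HasSum (fun j => a i j * x j) (T x i)

/-- Hadamard (entrywise) product of two matrices. -/
def hadamard (a b : ℕ → ℕ → ℝ) : ℕ → ℕ → ℝ := fun i j => a i j * b i j

/-- Hadamard (entrywise) power `a^{(t)}`. -/
def hadPow (a : ℕ → ℕ → ℝ) (t : ℝ) : ℕ → ℕ → ℝ := fun i j => a i j ^ t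

/-- Hadamard product of a finite family of matrices. -/
def hadProd {m : ℕ} (A : Fin m → ℕ → ℕ → ℝ) : ℕ → ℕ → ℝ := fun i j => ∏ k, A k i j

/-- Matrix product of two infinite matrices. -/
def matMul (a b : ℕ → ℕ → ℝ) : ℕ → ℕ → ℝ := fun i j => ∑' k, a i k * b k j

/-- The identity matrix. -/
def idMat : ℕ → ℕ → ℝ := fun i j => if i = j then 1 else 0

/-- Product of a list of matrices. -/
def matListProd : List (ℕ → ℕ → ℝ) → ℕ → ℕ → ℝ
  | [] => idMat
  | a :: l => matMul a (matListProd l)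

/-- Transposed matrix. -/
def transp (a : ℕ → ℕ → ℝ) : ℕ → ℕ → ℝ := fun i j => a j i

/-- The cyclic matrix product `A_i A_{i+1} ⋯ A_m A_1 ⋯ A_{i-1}` starting at index `i`. -/
def cycMatProd {m : ℕ} (A : Fin m → ℕ → ℕ → ℝ) (i : Fin m) : ℕ → ℕ → ℝ :=
  matListProd (List.ofFn fun k : Fin m => A (i + k))

/-- The cyclic operator product `T_i T_{i+1} ⋯ T_m T_1 ⋯ T_{i-1}` starting at index `i`
(operator multiplication is composition). -/
def cycOpProd {m : ℕ} {p : ℝ≥0∞} [Fact (1 ≤ p)]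
    (T : Fin m → lpSeq p →L[ℝ] lpSeq p) (i : Fin m) : lpSeq p →L[ℝ] lpSeq p :=
  (List.ofFn fun k : Fin m => T (i + k)).prod

/-- The numerical radius of a bounded operator on `ℓ²`:
`w(T) = sup { |⟨T f, f⟩| : ‖f‖ = 1 }`. -/
def numRadius (T : lpSeq 2 →L[ℝ] lpSeq 2) : ℝ :=
  sSup { r : ℝ | ∃ f : lpSeq 2, ‖f‖ = 1 ∧ r = |⟪T f, f⟫_ℝ| }

/-! ### Auxiliary material -/

lemma memAbs (f : lpSeq 2) : Memℓp (fun i => |f i|) 2 := by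
  have h := lp.memℓp f
  rw [memℓp_gen_iff (by norm_num)] at h ⊢
  simpa [Real.norm_eq_abs, abs_abs] using h

/-- Entrywise absolute value on `ℓ²`. -/
def absLp (f : lpSeq 2) : lpSeq 2 := ⟨fun i => |f i|, memAbs f⟩

@[simp] lemma absLp_apply (f : lpSeq 2) (i : ℕ) : absLp f i = |f i| := rfl

lemma norm_absLp (f : lpSeq 2) : ‖absLp f‖ = ‖f‖ := by
  rw [lp.norm_eq_tsum_rpow (by norm_num), lp.norm_eq_tsum_rpow (by norm_num)]
  congr 1
  exact tsum_congr fun i => by simp [Real.norm_eq_abs, abs_abs]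

lemma mem_of_dom {y : ℕ → ℝ} (g : lpSeq 2) (h : ∀ i, |y i| ≤ |g i|) : Memℓp y 2 := by
  apply memℓp_gen
  have hg := ((lp.memℓp g).summable (by norm_num : (0:ℝ) < (2:ℝ≥0∞).toReal))
  refine Summable.of_nonneg_of_le (fun i => ?_) (fun i => ?_) hg
  · positivity
  · apply Real.rpow_le_rpow (norm_nonneg _) _ (by norm_num)
    simpa [Real.norm_eq_abs] using h i

lemma norm_le_of_dom {f g : lpSeq 2} (h : ∀ i, |f i| ≤ |g i|) : ‖f‖ ≤ ‖g‖ := by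
  rw [lp.norm_eq_tsum_rpow (by norm_num), lp.norm_eq_tsum_rpow (by norm_num)]
  apply Real.rpow_le_rpow (tsum_nonneg fun i => by positivity)
  · refine Summable.tsum_le_tsum (fun i => ?_)
      ((lp.memℓp f).summable (by norm_num)) ((lp.memℓp g).summable (by norm_num))
    apply Real.rpow_le_rpow (norm_nonneg _) _ (by norm_num)
    simpa [Real.norm_eq_abs] using h i
  · norm_num

/-- A non-negative matrix dominated by `C` times a represented matrix is itself
represented by some bounded operator. -/
lemma exists_represents {a b : ℕ → ℕ → ℝ} {T : lpSeq 2 →L[ℝ] lpSeq 2}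
    (ha : ∀ i j, 0 ≤ a i j) (hb : ∀ i j, 0 ≤ b i j)
    (hrep : Represents 2 a T) {C : ℝ} (hC : 0 ≤ C)
    (hba : ∀ i j, b i j ≤ C * a i j) :
    ∃ S : lpSeq 2 →L[ℝ] lpSeq 2, Represents 2 b S := by
  have hrow : ∀ (x : lpSeq 2) (i : ℕ), Summable fun j => b i j * x j := by
    intro x i
    refine Summable.of_norm_bounded (((hrep (absLp x) i).summable).mul_left C) (fun j => ?_)
    simp only [Real.norm_eq_abs, abs_mul, abs_of_nonneg (hb i j), absLp_apply]
    rw [← mul_assoc]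
    exact mul_le_mul_of_nonneg_right (hba i j) (abs_nonneg _)
  set y : lpSeq 2 → ℕ → ℝ := fun x i => ∑' j, b i j * x j with hy
  have hybound : ∀ (x : lpSeq 2) (i : ℕ), |y x i| ≤ C * T (absLp x) i := by
    intro x i
    have habs : |y x i| ≤ ∑' j, |b i j * x j| := by
      simpa only [Real.norm_eq_abs] using
        norm_tsum_le_tsum_norm (f := fun j => b i j * x j)
          (by simpa only [Real.norm_eq_abs] using (hrow x i).abs)
    calc |y x i| ≤ ∑' j, |b i j * x j| := habs
    _ ≤ ∑' j, C * (a i j * |x j|) := by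
        refine Summable.tsum_le_tsum (fun j => ?_) (hrow x i).abs
          (((hrep (absLp x) i).summable).mul_left C)
        rw [abs_mul, abs_of_nonneg (hb i j), ← mul_assoc]
        exact mul_le_mul_of_nonneg_right (hba i j) (abs_nonneg _)
    _ = C * T (absLp x) i := by
        rw [tsum_mul_left]
        congr 1
        exact (hrep (absLp x) i).tsum_eq
  have hydom : ∀ x : lpSeq 2, ∀ i, |y x i| ≤ |(C • T (absLp x)) i| := by
    intro x i
    rw [lp.coeFn_smul]
    refine (hybound x i).trans ?_
    simp only [Pi.smul_apply, smul_eq_mul]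
    exact le_abs_self _
  have hmem : ∀ x : lpSeq 2, Memℓp (y x) 2 := fun x => mem_of_dom _ (hydom x)
  set L : lpSeq 2 →ₗ[ℝ] lpSeq 2 :=
    { toFun := fun x => ⟨y x, hmem x⟩
      map_add' := by
        intro x x'
        apply Subtype.ext
        funext i
        have : ∀ j, b i j * (x + x') j = b i j * x j + b i j * x' j := fun j => by
          rw [lp.coeFn_add]; simp [mul_add]
        show y (x + x') i = y x i + y x' i
        simp only [hy, this]
        exact Summable.tsum_add (hrow x i) (hrow x' i)
      map_smul' := by
        intro c x
        apply Subtype.ext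
        funext i
        have : ∀ j, b i j * (c • x) j = c * (b i j * x j) := fun j => by
          rw [lp.coeFn_smul]; simp [smul_eq_mul]; ring
        show y (c • x) i = c * y x i
        simp only [hy, this]
        exact tsum_mul_left } with hL
  refine ⟨L.mkContinuous (C * ‖T‖) (fun x => ?_), fun x i => ?_⟩
  · have h1 : ‖(⟨y x, hmem x⟩ : lpSeq 2)‖ ≤ ‖C • T (absLp x)‖ := norm_le_of_dom (hydom x)
    refine h1.trans ?_
    rw [norm_smul, Real.norm_eq_abs, abs_of_nonneg hC, mul_assoc]
    refine mul_le_mul_of_nonneg_left ?_ hC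
    calc ‖T (absLp x)‖ ≤ ‖T‖ * ‖absLp x‖ := T.le_opNorm _
    _ = ‖T‖ * ‖x‖ := by rw [norm_absLp]
  · exact (hrow x i).hasSum

/-- A canonical unit vector. -/
def e0 : lpSeq 2 := lp.single 2 0 (1 : ℝ)

lemma norm_e0 : ‖e0‖ = 1 := by
  have := lp.norm_single (E := fun _ : ℕ => ℝ) (p := 2) (by norm_num) 0 (1:ℝ)
  simpa [e0] using this

lemma entry_le_norm {a : ℕ → ℕ → ℝ} {T : lpSeq 2 →L[ℝ] lpSeq 2}
    (hrep : Represents 2 a T) (i j : ℕ) (ha : 0 ≤ a i j) : a i j ≤ ‖T‖ := by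
  set ej : lpSeq 2 := lp.single 2 j (1 : ℝ) with hej
  have hsum : HasSum (fun l => a i l * ej l) (T ej i) := hrep ej i
  have h2 : HasSum (fun l => a i l * ej l) (a i j) := by
    have : (fun l => a i l * ej l) = fun l => if l = j then a i j else 0 := by
      funext l
      by_cases h : l = j
      · subst h; simp [hej, lp.single_apply_self]
      · simp [hej, lp.single_apply_ne 2 j _ h, h]
    rw [this]
    exact hasSum_ite_eq j (a i j)
  have he : a i j = T ej i := h2.unique hsum
  have hn : ‖ej‖ = 1 := by
    have := lp.norm_single (E := fun _ : ℕ => ℝ) (p := 2) (by norm_num) j (1:ℝ)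
    simpa [hej] using this
  calc a i j = T ej i := he
  _ ≤ |T ej i| := le_abs_self _
  _ ≤ ‖T ej‖ := by
      simpa [Real.norm_eq_abs] using lp.norm_apply_le_norm (by norm_num) (T ej) i
  _ ≤ ‖T‖ * ‖ej‖ := T.le_opNorm _
  _ = ‖T‖ := by rw [hn, mul_one]

lemma radSet_bddAbove (T : lpSeq 2 →L[ℝ] lpSeq 2) :
    BddAbove { r : ℝ | ∃ f : lpSeq 2, ‖f‖ = 1 ∧ r = |⟪T f, f⟫_ℝ| } := by
  refine ⟨‖T‖, ?_⟩
  rintro r ⟨f, hf, rfl⟩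
  calc |⟪T f, f⟫_ℝ| ≤ ‖T f‖ * ‖f‖ := abs_real_inner_le_norm _ _
  _ ≤ ‖T‖ * ‖f‖ * ‖f‖ := mul_le_mul_of_nonneg_right (T.le_opNorm f) (norm_nonneg f)
  _ = ‖T‖ := by rw [hf]; ring

lemma inner_le_numRadius (T : lpSeq 2 →L[ℝ] lpSeq 2) {f : lpSeq 2} (hf : ‖f‖ = 1) :
    |⟪T f, f⟫_ℝ| ≤ numRadius T :=
  le_csSup (radSet_bddAbove T) ⟨f, hf, rfl⟩

lemma numRadius_nonneg (T : lpSeq 2 →L[ℝ] lpSeq 2) : 0 ≤ numRadius T :=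
  le_trans (abs_nonneg _) (inner_le_numRadius T norm_e0)

lemma real_geom {m : ℕ} (hm : 0 < m) (a : Fin m → ℝ) (ha : ∀ k, 0 ≤ a k)
    {c : ℝ} (hc : 0 ≤ c) :
    ∏ k, (a k ^ m * c) ^ (1/(m:ℝ)) = (∏ k, a k) * c := by
  have hm' : (m:ℝ) ≠ 0 := Nat.cast_ne_zero.mpr hm.ne'
  have h1 : ∀ k : Fin m, (a k ^ m * c) ^ (1/(m:ℝ)) = a k * c ^ (1/(m:ℝ)) := by
    intro k
    rw [Real.mul_rpow (pow_nonneg (ha k) m) hc, ← Real.rpow_natCast (a k) m,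
      ← Real.rpow_mul (ha k)]
    rw [mul_one_div, div_self hm', Real.rpow_one]
  rw [Finset.prod_congr rfl (fun k _ => h1 k), Finset.prod_mul_distrib,
    Finset.prod_const, Finset.card_univ, Fintype.card_fin,
    ← Real.rpow_natCast (c ^ (1/(m:ℝ))) m, ← Real.rpow_mul hc]
  rw [one_div, inv_mul_cancel₀ hm', Real.rpow_one]

lemma tsum_holder {m : ℕ} (hm : 0 < m) (F : Fin m → ℕ × ℕ → ℝ≥0∞) :
    ∑' p : ℕ × ℕ, ∏ k, F k p ^ (1/(m:ℝ)) ≤ ∏ k, (∑' p : ℕ × ℕ, F k p) ^ (1/(m:ℝ)) := by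
  have hm' : (m:ℝ) ≠ 0 := Nat.cast_ne_zero.mpr hm.ne'
  have h1 : ∑ _k : Fin m, (1/(m:ℝ)) = 1 := by
    rw [Finset.sum_const, Finset.card_univ, Fintype.card_fin, nsmul_eq_mul,
      mul_one_div, div_self hm']
  calc ∑' p : ℕ × ℕ, ∏ k, F k p ^ (1/(m:ℝ))
      = ∫⁻ p, ∏ k, F k p ^ (1/(m:ℝ)) ∂(MeasureTheory.Measure.count) :=
        (MeasureTheory.lintegral_count _).symm
    _ ≤ ∏ k, (∫⁻ p, F k p ∂(MeasureTheory.Measure.count)) ^ (1/(m:ℝ)) :=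
        ENNReal.lintegral_prod_norm_pow_le Finset.univ
          (fun k _ => (measurable_of_countable (F k)).aemeasurable) h1
          (fun k _ => by positivity)
    _ = ∏ k, (∑' p : ℕ × ℕ, F k p) ^ (1/(m:ℝ)) := by
        refine Finset.prod_congr rfl fun k _ => ?_
        rw [MeasureTheory.lintegral_count]

/-- The core inequality: for a unit vector `f`,
`|⟨Hf, f⟩| ≤ ∏ k, w(S k)^(1/m)`. -/
lemma core_ineq {m : ℕ} (hm : 0 < m) (A : Fin m → ℕ → ℕ → ℝ) (hA : ∀ k i j, 0 ≤ A k i j)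
    (H : lpSeq 2 →L[ℝ] lpSeq 2) (S : Fin m → lpSeq 2 →L[ℝ] lpSeq 2)
    (hH : Represents 2 (hadProd A) H) (hS : ∀ k, Represents 2 (hadPow (A k) (m : ℝ)) (S k))
    (f : lpSeq 2) (hf : ‖f‖ = 1) :
    |⟪H f, f⟫_ℝ| ≤ ∏ k, (numRadius (S k)) ^ (1/(m:ℝ)) := by
  set g : lpSeq 2 := absLp f with hgdef
  have hg : ‖g‖ = 1 := by rw [hgdef, norm_absLp, hf]
  have hgnn : ∀ i, 0 ≤ g i := fun i => by rw [hgdef]; exact abs_nonneg _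
  have hB : ∀ i j, 0 ≤ hadProd A i j := fun i j =>
    Finset.prod_nonneg fun k _ => hA k i j
  -- the S k rows, rewritten with natural powers
  have hSrow : ∀ k (x : lpSeq 2) (i : ℕ),
      HasSum (fun j => A k i j ^ m * x j) (S k x i) := by
    intro k x i
    have h := hS k x i
    have he : (fun j => hadPow (A k) (m:ℝ) i j * x j) = fun j => A k i j ^ m * x j := by
      funext j
      rw [hadPow, ← Real.rpow_natCast (A k i j) m]
    rwa [he] at h
  have hHgnn : ∀ i, 0 ≤ H g i := fun i => by
    rw [← (hH g i).tsum_eq]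
    exact tsum_nonneg fun j => mul_nonneg (hB i j) (hgnn j)
  have hSgnn : ∀ k i, 0 ≤ S k g i := fun k i => by
    rw [← (hSrow k g i).tsum_eq]
    exact tsum_nonneg fun j => mul_nonneg (pow_nonneg (hA k i j) m) (hgnn j)
  have hsumHf : Summable fun i => H f i * f i := by
    simpa [RCLike.inner_apply, mul_comm] using lp.summable_inner (𝕜 := ℝ) (H f) f
  have hsumHg : Summable fun i => H g i * g i := by
    simpa [RCLike.inner_apply, mul_comm] using lp.summable_inner (𝕜 := ℝ) (H g) g
  have hsumSg : ∀ k, Summable fun i => S k g i * g i := fun k => by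
    simpa [RCLike.inner_apply, mul_comm] using lp.summable_inner (𝕜 := ℝ) (S k g) g
  -- Step 1
  have step1 : |⟪H f, f⟫_ℝ| ≤ ∑' i, H g i * g i := by
    have hinner : ⟪H f, f⟫_ℝ = ∑' i, H f i * f i := by
      rw [lp.inner_eq_tsum]; simp [RCLike.inner_apply, mul_comm]
    have habs : |∑' i, H f i * f i| ≤ ∑' i, |H f i * f i| := by
      simpa only [Real.norm_eq_abs] using
        norm_tsum_le_tsum_norm (f := fun i => H f i * f i)
          (by simpa only [Real.norm_eq_abs] using hsumHf.abs)
    have hterm : ∀ i, |H f i * f i| ≤ H g i * g i := by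
      intro i
      have h1 : |H f i| ≤ H g i := by
        rw [← (hH f i).tsum_eq, ← (hH g i).tsum_eq]
        have h2 : |∑' j, hadProd A i j * f j| ≤ ∑' j, |hadProd A i j * f j| := by
          simpa only [Real.norm_eq_abs] using
            norm_tsum_le_tsum_norm (f := fun j => hadProd A i j * f j)
              (by simpa only [Real.norm_eq_abs] using (hH f i).summable.abs)
        refine h2.trans (le_of_eq (tsum_congr fun j => ?_))
        rw [abs_mul, abs_of_nonneg (hB i j)]
        rfl
      rw [abs_mul]
      exact mul_le_mul h1 (le_of_eq rfl) (abs_nonneg _) (hHgnn i)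
    rw [hinner]
    exact habs.trans (Summable.tsum_le_tsum hterm hsumHf.abs hsumHg)
  -- ENNReal part
  set F : Fin m → ℕ × ℕ → ℝ≥0∞ :=
    fun k p => ENNReal.ofReal (A k p.1 p.2 ^ m * (g p.2 * g p.1)) with hF
  have claimA : ∀ p : ℕ × ℕ, ∏ k, F k p ^ (1/(m:ℝ))
      = ENNReal.ofReal (hadProd A p.1 p.2 * (g p.2 * g p.1)) := by
    intro p
    have h1 : ∀ k : Fin m, F k p ^ (1/(m:ℝ))
        = ENNReal.ofReal ((A k p.1 p.2 ^ m * (g p.2 * g p.1)) ^ (1/(m:ℝ))) := fun k =>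
      ENNReal.ofReal_rpow_of_nonneg
        (mul_nonneg (pow_nonneg (hA k p.1 p.2) m) (mul_nonneg (hgnn p.2) (hgnn p.1)))
        (by positivity)
    rw [Finset.prod_congr rfl (fun k _ => h1 k),
      ← ENNReal.ofReal_prod_of_nonneg (fun k _ => Real.rpow_nonneg
        (mul_nonneg (pow_nonneg (hA k p.1 p.2) m) (mul_nonneg (hgnn p.2) (hgnn p.1))) _),
      real_geom hm (fun k => A k p.1 p.2) (fun k => hA k p.1 p.2)
        (mul_nonneg (hgnn p.2) (hgnn p.1))]
    rfl
  have claimB : ∑' p : ℕ × ℕ, ENNReal.ofReal (hadProd A p.1 p.2 * (g p.2 * g p.1))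
      = ENNReal.ofReal (∑' i, H g i * g i) := by
    rw [ENNReal.tsum_prod']
    have hinner : ∀ i : ℕ, (∑' j, ENNReal.ofReal (hadProd A i j * (g j * g i)))
        = ENNReal.ofReal (H g i * g i) := by
      intro i
      have hsumij : Summable fun j => hadProd A i j * (g j * g i) := by
        refine ((hH g i).summable.mul_right (g i)).congr fun j => by ring
      rw [← ENNReal.ofReal_tsum_of_nonneg
        (fun j => mul_nonneg (hB i j) (mul_nonneg (hgnn j) (hgnn i))) hsumij]
      congr 1
      calc ∑' j, hadProd A i j * (g j * g i)
          = ∑' j, (hadProd A i j * g j) * g i := tsum_congr fun j => by ring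
        _ = (∑' j, hadProd A i j * g j) * g i := tsum_mul_right
        _ = H g i * g i := by rw [(hH g i).tsum_eq]
    rw [tsum_congr hinner,
      ← ENNReal.ofReal_tsum_of_nonneg (fun i => mul_nonneg (hHgnn i) (hgnn i)) hsumHg]
  have claimC : ∀ k : Fin m, ∑' p : ℕ × ℕ, F k p = ENNReal.ofReal (∑' i, S k g i * g i) := by
    intro k
    rw [ENNReal.tsum_prod']
    have hinner : ∀ i : ℕ, (∑' j, F k (i, j)) = ENNReal.ofReal (S k g i * g i) := by
      intro i
      have hsumij : Summable fun j => A k i j ^ m * (g j * g i) := by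
        refine ((hSrow k g i).summable.mul_right (g i)).congr fun j => by ring
      rw [hF]
      rw [← ENNReal.ofReal_tsum_of_nonneg
        (fun j => mul_nonneg (pow_nonneg (hA k i j) m) (mul_nonneg (hgnn j) (hgnn i))) hsumij]
      congr 1
      calc ∑' j, A k i j ^ m * (g j * g i)
          = ∑' j, (A k i j ^ m * g j) * g i := tsum_congr fun j => by ring
        _ = (∑' j, A k i j ^ m * g j) * g i := tsum_mul_right
        _ = S k g i * g i := by rw [(hSrow k g i).tsum_eq]
    rw [tsum_congr hinner,
      ← ENNReal.ofReal_tsum_of_nonneg (fun i => mul_nonneg (hSgnn k i) (hgnn i)) (hsumSg k)]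
  -- inner products with g
  have hSinner : ∀ k, ⟪S k g, g⟫_ℝ = ∑' i, S k g i * g i := fun k => by
    rw [lp.inner_eq_tsum]; simp [RCLike.inner_apply, mul_comm]
  have hSinn_nn : ∀ k, 0 ≤ ⟪S k g, g⟫_ℝ := fun k => by
    rw [hSinner k]
    exact tsum_nonneg fun i => mul_nonneg (hSgnn k i) (hgnn i)
  -- combine in ℝ≥0∞
  have key : ENNReal.ofReal (∑' i, H g i * g i)
      ≤ ENNReal.ofReal (∏ k, (⟪S k g, g⟫_ℝ) ^ (1/(m:ℝ))) := by
    calc ENNReal.ofReal (∑' i, H g i * g i)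
        = ∑' p : ℕ × ℕ, ∏ k, F k p ^ (1/(m:ℝ)) := by
          rw [← claimB, tsum_congr claimA]
      _ ≤ ∏ k, (∑' p : ℕ × ℕ, F k p) ^ (1/(m:ℝ)) := tsum_holder hm F
      _ = ∏ k, ENNReal.ofReal ((⟪S k g, g⟫_ℝ) ^ (1/(m:ℝ))) := by
          refine Finset.prod_congr rfl fun k _ => ?_
          rw [claimC k, ← hSinner k]
          exact ENNReal.ofReal_rpow_of_nonneg (hSinn_nn k) (by positivity)
      _ = ENNReal.ofReal (∏ k, (⟪S k g, g⟫_ℝ) ^ (1/(m:ℝ))) :=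
          (ENNReal.ofReal_prod_of_nonneg fun k _ =>
            Real.rpow_nonneg (hSinn_nn k) _).symm
  have key2 : ∑' i, H g i * g i ≤ ∏ k, (⟪S k g, g⟫_ℝ) ^ (1/(m:ℝ)) := by
    have hnn : 0 ≤ ∑' i, H g i * g i :=
      tsum_nonneg fun i => mul_nonneg (hHgnn i) (hgnn i)
    exact (ENNReal.ofReal_le_ofReal_iff
      (Finset.prod_nonneg fun k _ => Real.rpow_nonneg (hSinn_nn k) _)).mp key
  refine (step1.trans key2).trans ?_
  refine Finset.prod_le_prod (fun k _ => Real.rpow_nonneg (hSinn_nn k) _) fun k _ => ?_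
  refine Real.rpow_le_rpow (hSinn_nn k) ?_ (by positivity)
  exact (le_abs_self _).trans (inner_le_numRadius (S k) hg)

/-- on `ℓ²`, `w(A₁∘⋯∘A_m) ≤ (w(A₁^{(m)}) w(A₂^{(m)}) ⋯ w(A_m^{(m)}))^{1/m}`. -/
theorem numRadius_hadamard_le_geom_mean
    (m : ℕ) (hm : 0 < m)
    (A : Fin m → ℕ → ℕ → ℝ) (hA : ∀ k i j, 0 ≤ A k i j)
    (T : Fin m → lpSeq 2 →L[ℝ] lpSeq 2) (hT : ∀ k, Represents 2 (A k) (T k)) :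
    ∃ (H : lpSeq 2 →L[ℝ] lpSeq 2) (S : Fin m → lpSeq 2 →L[ℝ] lpSeq 2),
      Represents 2 (hadProd A) H ∧
      (∀ k, Represents 2 (hadPow (A k) (m : ℝ)) (S k)) ∧
      numRadius H ≤ (∏ k, numRadius (S k)) ^ (1 / (m : ℝ)) := by
  have hentry : ∀ k i j, A k i j ≤ ‖T k‖ := fun k i j =>
    entry_le_norm (hT k) i j (hA k i j)
  -- construct H
  set k0 : Fin m := ⟨0, hm⟩ with hk0
  have hexH : ∃ H : lpSeq 2 →L[ℝ] lpSeq 2, Represents 2 (hadProd A) H := by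
    refine exists_represents (hA k0) (fun i j => Finset.prod_nonneg fun k _ => hA k i j)
      (hT k0) (C := ∏ k ∈ Finset.univ.erase k0, ‖T k‖)
      (Finset.prod_nonneg fun k _ => norm_nonneg _) (fun i j => ?_)
    have h1 : hadProd A i j = A k0 i j * ∏ k ∈ Finset.univ.erase k0, A k i j := by
      rw [hadProd]
      exact (Finset.mul_prod_erase Finset.univ (fun k => A k i j)
        (Finset.mem_univ k0)).symm
    rw [h1, mul_comm]
    refine mul_le_mul_of_nonneg_right ?_ (hA k0 i j)
    exact Finset.prod_le_prod (fun k _ => hA k i j) (fun k _ => hentry k i j)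
  -- construct S k
  have hexS : ∀ k, ∃ Sk : lpSeq 2 →L[ℝ] lpSeq 2,
      Represents 2 (hadPow (A k) (m : ℝ)) Sk := by
    intro k
    refine exists_represents (hA k) (fun i j => Real.rpow_nonneg (hA k i j) _)
      (hT k) (C := ‖T k‖ ^ (m - 1)) (pow_nonneg (norm_nonneg _) _) (fun i j => ?_)
    have h1 : hadPow (A k) (m:ℝ) i j = A k i j ^ (m - 1) * A k i j := by
      have h2 : A k i j ^ (m:ℝ) = A k i j ^ m := Real.rpow_natCast _ m
      rw [hadPow, h2, ← pow_succ, Nat.sub_add_cancel hm]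
    rw [h1]
    exact mul_le_mul_of_nonneg_right
      (pow_le_pow_left₀ (hA k i j) (hentry k i j) _) (hA k i j)
  choose S hS using hexS
  obtain ⟨H, hH⟩ := hexH
  refine ⟨H, S, hH, hS, ?_⟩
  have hrhs : (∏ k, numRadius (S k)) ^ (1 / (m:ℝ)) = ∏ k, (numRadius (S k)) ^ (1/(m:ℝ)) :=
    (Real.finset_prod_rpow Finset.univ _ (fun k _ => numRadius_nonneg _) _).symm
  rw [numRadius, hrhs]
  refine Real.sSup_le ?_ (Finset.prod_nonneg fun k _ => Real.rpow_nonneg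
    (numRadius_nonneg _) _)
  rintro r ⟨f, hf, rfl⟩
  exact core_ineq hm A hA H S hH hS f hf
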